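/- Let Γ₀ be a k-dimensional linear subspace of ℝ^n, let P be the orthogonal projection onto the orthogonal complement of Γ₀, and let Γ' be a coordinate subspace spanned by n-k-1 standard basis vectors such that the smallest nonzero eigenvalue bound ‖PQ†a‖₂ ≥ √(1/(4n(n-k)))·‖a‖₂ holds for all a ∈ Γ', where Q is the orthogonal projection onto Γ'. Then for any translate v' ∈ ℝ^n, the shifted Boolean subcube B' + v' (where B' = {Σ_{i} x_i e_i : x_i ∈ {0,1}, e_i spanning Γ'}) contains at most one point at distance less than (1/4)·n^{-1/2}·(n-k)^{-1/2} from any fixed affine translate Γ of Γ₀. -/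

import Mathlib

lemma abs_coord_le_norm' {n : ℕ} (z : EuclideanSpace ℝ (Fin n)) (i : Fin n) :
    |z i| ≤ ‖z‖ := by
  rw [EuclideanSpace.norm_eq]
  have h : |z i| = Real.sqrt (‖z i‖ ^ 2) := by
    rw [Real.sqrt_sq_eq_abs, Real.norm_eq_abs, abs_abs]
  rw [h]
  apply Real.sqrt_le_sqrt
  exact Finset.single_le_sum (f := fun j => ‖z j‖ ^ 2) (fun j _ => sq_nonneg _)
    (Finset.mem_univ i)

set_option maxHeartbeats 1000000 in
theorem shifted_boolean_subcube_close_point_unique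
    (n k : ℕ) (hk : k < n)
    (Γ₀ : Submodule ℝ (EuclideanSpace ℝ (Fin n)))
    (hdim : Module.finrank ℝ Γ₀ = k)
    (S : Finset (Fin n)) (hS : S.card = n - k - 1)
    (hproj : ∀ a : EuclideanSpace ℝ (Fin n), (∀ i ∉ S, a i = 0) →
      Real.sqrt (1 / (4 * n * ((n : ℝ) - k))) * ‖a‖ ≤ ‖Γ₀ᗮ.orthogonalProjectionOnto a‖)
    (v' a₀ : EuclideanSpace ℝ (Fin n)) :
    Set.Subsingleton {x : EuclideanSpace ℝ (Fin n) |
      (∀ i ∈ S, x i - v' i = 0 ∨ x i - v' i = 1) ∧ (∀ i ∉ S, x i = v' i) ∧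
      Metric.infDist x ((a₀ + ·) '' (Γ₀ : Set (EuclideanSpace ℝ (Fin n)))) <
        (1 / 4) * (n : ℝ) ^ (-(1 : ℝ) / 2) * ((n - k : ℕ) : ℝ) ^ (-(1 : ℝ) / 2)} := by
  set ε : ℝ := (1 / 4) * (n : ℝ) ^ (-(1 : ℝ) / 2) * ((n - k : ℕ) : ℝ) ^ (-(1 : ℝ) / 2) with hε
  have hn0 : (0 : ℝ) < n := by exact_mod_cast (by omega : 0 < n)
  have hnk0 : (0 : ℝ) < ((n - k : ℕ) : ℝ) := by exact_mod_cast (by omega : 0 < n - k)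
  have hcast : ((n - k : ℕ) : ℝ) = (n : ℝ) - k := by rw [Nat.cast_sub hk.le]
  -- the sqrt constant equals 2ε
  have hkey : Real.sqrt (1 / (4 * n * ((n : ℝ) - k))) = 2 * ε := by
    rw [hε]
    set A : ℝ := (n : ℝ) ^ (-(1 : ℝ) / 2) with hA'
    set B : ℝ := ((n - k : ℕ) : ℝ) ^ (-(1 : ℝ) / 2) with hB'
    have hA : 0 ≤ A := Real.rpow_nonneg hn0.le _
    have hB : 0 ≤ B := Real.rpow_nonneg hnk0.le _
    have hA2 : A ^ 2 = ((n : ℝ))⁻¹ := by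
      rw [hA', ← Real.rpow_natCast _ 2, ← Real.rpow_mul hn0.le]
      rw [show ((2:ℕ):ℝ) = 2 by norm_num]; norm_num [Real.rpow_neg_one]
    have hB2 : B ^ 2 = (((n - k : ℕ) : ℝ))⁻¹ := by
      rw [hB', ← Real.rpow_natCast _ 2, ← Real.rpow_mul hnk0.le]
      rw [show ((2:ℕ):ℝ) = 2 by norm_num]; norm_num [Real.rpow_neg_one]
    have h : 1 / (4 * n * ((n : ℝ) - k)) = (2 * ((1/4) * A * B))^2 := by
      rw [mul_pow, mul_pow, mul_pow, hA2, hB2, hcast]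
      have h4 : ((n:ℝ) - k) ≠ 0 := by rw [← hcast]; positivity
      field_simp
      ring
    rw [h, Real.sqrt_sq (by positivity)]
  -- lower bound on infDist via the projection
  have hΓne : ((a₀ + ·) '' (Γ₀ : Set (EuclideanSpace ℝ (Fin n)))).Nonempty :=
    ⟨a₀ + 0, ⟨0, Γ₀.zero_mem, rfl⟩⟩
  have hlow : ∀ z : EuclideanSpace ℝ (Fin n),
      ‖Γ₀ᗮ.orthogonalProjectionOnto (z - a₀)‖ ≤
        Metric.infDist z ((a₀ + ·) '' (Γ₀ : Set (EuclideanSpace ℝ (Fin n)))) := by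
    intro z
    by_contra hcon
    push_neg at hcon
    obtain ⟨p, hp, hd⟩ := (Metric.infDist_lt_iff hΓne).1 hcon
    obtain ⟨g, hg, rfl⟩ := hp
    refine absurd hd (not_lt.2 ?_)
    have hPg : Γ₀ᗮ.orthogonalProjectionOnto g = 0 :=
      Submodule.orthogonalProjectionOnto_apply_of_mem_orthogonal
        (Submodule.le_orthogonal_orthogonal Γ₀ hg)
    have heq : Γ₀ᗮ.orthogonalProjectionOnto (z - (a₀ + g)) =
        Γ₀ᗮ.orthogonalProjectionOnto (z - a₀) := by
      rw [show z - (a₀ + g) = (z - a₀) - g by abel, map_sub, hPg, sub_zero]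
    rw [dist_eq_norm, ← heq]
    calc ‖Γ₀ᗮ.orthogonalProjectionOnto (z - (a₀ + g))‖
        ≤ ‖Γ₀ᗮ.orthogonalProjectionOnto‖ * ‖z - (a₀ + g)‖ :=
          (Γ₀ᗮ.orthogonalProjectionOnto).le_opNorm _
      _ ≤ 1 * ‖z - (a₀ + g)‖ := by
          gcongr; exact Submodule.orthogonalProjectionOnto_norm_le _
      _ = ‖z - (a₀ + g)‖ := one_mul _
  intro x hx y hy
  by_contra hne
  obtain ⟨hx1, hx2, hx3⟩ := hx
  obtain ⟨hy1, hy2, hy3⟩ := hy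
  set a : EuclideanSpace ℝ (Fin n) := x - y with ha'
  have hai : ∀ i, a i = x i - y i := fun i => rfl
  have ha0 : ∀ i ∉ S, a i = 0 := by
    intro i hi
    rw [hai, hx2 i hi, hy2 i hi, sub_self]
  have h1 : 1 ≤ ‖a‖ := by
    obtain ⟨i, hi⟩ : ∃ i, x i ≠ y i := by
      by_contra h
      push_neg at h
      exact hne (PiLp.ext h)
    have hiS : i ∈ S := by
      by_contra hiS
      exact hi ((hx2 i hiS).trans (hy2 i hiS).symm)
    have habs : |a i| = 1 := by
      rcases hx1 i hiS with h1 | h1 <;> rcases hy1 i hiS with h2 | h2 <;>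
        rw [hai] <;>
        [skip; skip; skip; skip] <;>
        first
          | (exfalso; apply hi; nlinarith)
          | (rw [show x i - y i = (x i - v' i) - (y i - v' i) by ring, h1, h2]; norm_num)
    calc (1:ℝ) = |a i| := habs.symm
      _ ≤ ‖a‖ := abs_coord_le_norm' a i
  have hPa := hproj a ha0
  have hPsub : ‖Γ₀ᗮ.orthogonalProjectionOnto a‖ < 2 * ε := by
    have : Γ₀ᗮ.orthogonalProjectionOnto a =
        Γ₀ᗮ.orthogonalProjectionOnto (x - a₀) - Γ₀ᗮ.orthogonalProjectionOnto (y - a₀) := by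
      rw [← map_sub, show (x - a₀) - (y - a₀) = x - y by abel, ha']
    rw [this]
    calc ‖Γ₀ᗮ.orthogonalProjectionOnto (x - a₀) - Γ₀ᗮ.orthogonalProjectionOnto (y - a₀)‖
        ≤ ‖Γ₀ᗮ.orthogonalProjectionOnto (x - a₀)‖ + ‖Γ₀ᗮ.orthogonalProjectionOnto (y - a₀)‖ :=
          norm_sub_le _ _
      _ < ε + ε := add_lt_add (lt_of_le_of_lt (hlow x) hx3) (lt_of_le_of_lt (hlow y) hy3)
      _ = 2 * ε := by ring
  have hsq : 0 ≤ Real.sqrt (1 / (4 * n * ((n : ℝ) - k))) := Real.sqrt_nonneg _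
  nlinarith [hPa, hPsub, hkey, h1, hsq]
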